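/- arXiv:1601.07466 — 2 statements merged into one kernel-verified Lean document; each statement's English description precedes it below -/
import Mathlib

section
/- Let f : P → ℂ be such that the function (λ,γ) ↦ f(λγ)·μ(λ)/n_λ on P×P is absolutely summable. Define f̃(λ) := ∑_{γ∈P} f(λγ). Then both series below converge absolutely and ∑_{λ∈P} f(λ)·φ(λ)/n_λ = ∑_{λ∈P} f̃(λ)·μ(λ)/n_λ. -/
/-- The set of partition divisors (sub-partitions) of `l`. -/
def pdivisors (l : Multiset ℕ+) : Finset (Multiset ℕ+) := l.powerset.toFinset

/-- Partition-theoretic Möbius function. -/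
def pmu (l : Multiset ℕ+) : ℂ := if l.Nodup then (-1 : ℂ) ^ (Multiset.card l) else 0

/-- The "integer" of a partition: the product of its parts. -/
def nInt (l : Multiset ℕ+) : ℕ := (l.map (fun a => (a : ℕ))).prod

/-- Partition-theoretic phi function. -/
noncomputable def pphi (l : Multiset ℕ+) : ℂ :=
  (nInt l : ℂ) * ∏ a ∈ l.toFinset, (1 - (a : ℂ)⁻¹)

/-- Convert a `Nat.Partition n` to a multiset of positive integers. -/
def toPtn {n : ℕ} (p : n.Partition) : Multiset ℕ+ :=
  p.parts.pmap (fun x hx => ⟨x, hx⟩) (fun _ hx => p.parts_pos hx)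

/-- The partition function `p(n)`. -/
def partcount (n : ℕ) : ℕ := Fintype.card (Nat.Partition n)

/-- A partition lies in `P₌` iff it is nonempty with all parts equal. -/
def isPeq (l : Multiset ℕ+) : Prop :=
  ∃ (a : ℕ+) (k : ℕ), 0 < k ∧ l = Multiset.replicate k a

lemma mem_pdivisors {d l : Multiset ℕ+} : d ∈ pdivisors l ↔ d ≤ l := by
  simp [pdivisors, Multiset.mem_powerset]

lemma nInt_ne_zero (l : Multiset ℕ+) : (nInt l : ℂ) ≠ 0 := by
  have : nInt l ≠ 0 := by
    unfold nInt
    refine Multiset.prod_ne_zero ?_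
    simp
  exact_mod_cast this

lemma nInt_zero : nInt 0 = 1 := by simp [nInt]

lemma nInt_cons (a : ℕ+) (s : Multiset ℕ+) : nInt (a ::ₘ s) = a * nInt s := by simp [nInt]

lemma nInt_cast (m : Multiset ℕ+) :
    ((nInt m : ℕ) : ℂ) = (m.map (fun a : ℕ+ => (a : ℂ))).prod := by
  induction m using Multiset.induction with
  | empty => simp [nInt_zero]
  | cons a s ih =>
    rw [nInt_cons, Multiset.map_cons, Multiset.prod_cons, ← ih]
    push_cast
    ring

lemma pdiv_sum (l : Multiset ℕ+) :
    ∑ d ∈ pdivisors l, pmu d / (nInt d : ℂ) = ∏ a ∈ l.toFinset, (1 - (a : ℂ)⁻¹) := by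
  classical
  have himg : Finset.image Finset.val l.toFinset.powerset ⊆ pdivisors l := by
    intro d hd
    simp only [Finset.mem_image] at hd
    obtain ⟨S, hS, rfl⟩ := hd
    rw [Finset.mem_powerset] at hS
    exact mem_pdivisors.2 ((Multiset.le_iff_subset S.nodup).2
      (fun a ha => Multiset.mem_toFinset.1 (hS ha)))
  have h1 : ∑ d ∈ pdivisors l, pmu d / (nInt d : ℂ)
      = ∑ S ∈ l.toFinset.powerset, pmu S.val / (nInt S.val : ℂ) := by
    rw [← Finset.sum_subset himg, Finset.sum_image]
    · intro x _ y _ hxy; exact Finset.val_inj.1 hxy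
    · intro d hd hd'
      have hnd : ¬ d.Nodup := by
        intro hnd
        refine hd' ?_
        refine Finset.mem_image.2 ⟨⟨d, hnd⟩, ?_, rfl⟩
        rw [Finset.mem_powerset]
        intro a ha
        exact Multiset.mem_toFinset.2 (Multiset.mem_of_le (mem_pdivisors.1 hd) ha)
      simp [pmu, hnd]
  rw [h1]
  have h2 : ∀ a : ℕ+, (1 : ℂ) - (a : ℂ)⁻¹ = -(a : ℂ)⁻¹ + 1 := by intro a; ring
  calc ∑ S ∈ l.toFinset.powerset, pmu S.val / (nInt S.val : ℂ)
      = ∑ S ∈ l.toFinset.powerset, (∏ a ∈ S, -(a : ℂ)⁻¹) * ∏ a ∈ l.toFinset \ S, (1:ℂ) := by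
        refine Finset.sum_congr rfl (fun S _ => ?_)
        have hnodup : S.val.Nodup := S.nodup
        have hcast : (nInt S.val : ℂ) = ∏ a ∈ S, (a : ℂ) := by
          rw [nInt_cast, Finset.prod]
        have hneg : ∏ a ∈ S, -(a : ℂ)⁻¹ = (-1) ^ S.card * (∏ a ∈ S, (a : ℂ))⁻¹ := by
          rw [← Finset.prod_inv_distrib, ← Finset.prod_const, ← Finset.prod_mul_distrib]
          exact Finset.prod_congr rfl (fun a _ => by ring)
        rw [pmu, if_pos hnodup, hcast]
        simp only [Finset.prod_const_one, mul_one]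
        rw [hneg, div_eq_mul_inv]
        rfl
    _ = ∏ a ∈ l.toFinset, (1 - (a : ℂ)⁻¹) := by
        rw [← Finset.prod_add]
        exact Finset.prod_congr rfl (fun a _ => (h2 a).symm)

noncomputable def Gaux (f : Multiset ℕ+ → ℂ) (q : Multiset ℕ+ × Multiset ℕ+) : ℂ :=
  if q.2 ≤ q.1 then f q.1 * pmu q.2 / (nInt q.2 : ℂ) else 0

/-- If `(λ,γ) ↦ f(λγ)·μ(λ)/n_λ` is absolutely summable on `P×P`, then with
`f̃(λ) := ∑_{γ∈P} f(λγ)`, both series converge absolutely and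
`∑_{λ∈P} f(λ)φ(λ)/n_λ = ∑_{λ∈P} f̃(λ)μ(λ)/n_λ`. -/
theorem pphi_pmu_series (f : Multiset ℕ+ → ℂ)
    (h : Summable (fun p : Multiset ℕ+ × Multiset ℕ+ =>
      ‖f (p.1 + p.2) * pmu p.1 / (nInt p.1 : ℂ)‖)) :
    Summable (fun l : Multiset ℕ+ => ‖f l * pphi l / (nInt l : ℂ)‖) ∧
    Summable (fun l : Multiset ℕ+ =>
      ‖(∑' g : Multiset ℕ+, f (l + g)) * pmu l / (nInt l : ℂ)‖) ∧
    (∑' l : Multiset ℕ+, f l * pphi l / (nInt l : ℂ))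
      = ∑' l : Multiset ℕ+, (∑' g : Multiset ℕ+, f (l + g)) * pmu l / (nInt l : ℂ) := by
  classical
  have hgs : Summable (fun p : Multiset ℕ+ × Multiset ℕ+ =>
      f (p.1 + p.2) * pmu p.1 / (nInt p.1 : ℂ)) := Summable.of_norm h
  have hi : Function.Injective (fun p : Multiset ℕ+ × Multiset ℕ+ => (p.1 + p.2, p.1)) := by
    rintro ⟨a, b⟩ ⟨c, d⟩ hq
    simp only [Prod.mk.injEq] at hq
    obtain ⟨h1, h2⟩ := hq
    subst h2
    have hbd : b = d := add_left_cancel h1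
    rw [hbd]
  have hGi : ∀ p : Multiset ℕ+ × Multiset ℕ+,
      Gaux f (p.1 + p.2, p.1) = f (p.1 + p.2) * pmu p.1 / (nInt p.1 : ℂ) := by
    intro p
    simp only [Gaux]
    rw [if_pos (le_add_right le_rfl)]
  have hrange : ∀ q ∉ Set.range (fun p : Multiset ℕ+ × Multiset ℕ+ => (p.1 + p.2, p.1)),
      Gaux f q = 0 := by
    rintro ⟨lam, del⟩ hq
    by_cases hle : del ≤ lam
    · exact absurd ⟨(del, lam - del), by simp [add_tsub_cancel_of_le hle]⟩ hq
    · simp [Gaux, hle]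
  have hGnorm : Summable (fun q => ‖Gaux f q‖) := by
    refine (hi.summable_iff (fun q hq => by rw [hrange q hq, norm_zero])).1 ?_
    refine h.congr (fun p => ?_)
    simp only [Function.comp]
    rw [hGi]
  have hGsum : Summable (Gaux f) := Summable.of_norm hGnorm
  have hGfiber := (summable_prod_of_nonneg (fun q => norm_nonneg (Gaux f q))).1 hGnorm
  have hgfiber := (summable_prod_of_nonneg
    (fun p : Multiset ℕ+ × Multiset ℕ+ =>
      norm_nonneg (f (p.1 + p.2) * pmu p.1 / (nInt p.1 : ℂ)))).1 h
  have key : ∀ l : Multiset ℕ+,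
      ∑ d ∈ pdivisors l, Gaux f (l, d) = f l * pphi l / (nInt l : ℂ) := by
    intro l
    have h1 : ∑ d ∈ pdivisors l, Gaux f (l, d)
        = f l * ∑ d ∈ pdivisors l, pmu d / (nInt d : ℂ) := by
      rw [Finset.mul_sum]
      refine Finset.sum_congr rfl (fun d hd => ?_)
      simp only [Gaux]
      rw [if_pos (mem_pdivisors.1 hd), mul_div_assoc]
    have hn := nInt_ne_zero l
    rw [h1, pdiv_sum, pphi, mul_comm ((nInt l : ℂ)), mul_div_assoc, mul_div_assoc,
      div_self hn, mul_one]
  have hsum1 : Summable (fun l : Multiset ℕ+ => ‖f l * pphi l / (nInt l : ℂ)‖) := by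
    refine Summable.of_nonneg_of_le (fun l => norm_nonneg _) (fun l => ?_) hGfiber.2
    rw [← key l]
    calc ‖∑ d ∈ pdivisors l, Gaux f (l, d)‖
        ≤ ∑ d ∈ pdivisors l, ‖Gaux f (l, d)‖ := norm_sum_le _ _
      _ ≤ ∑' d, ‖Gaux f (l, d)‖ :=
          Summable.sum_le_tsum _ (fun d _ => norm_nonneg _) (hGfiber.1 l)
  have hFl : ∀ l : Multiset ℕ+,
      (∑' γ, f (l + γ)) * pmu l / (nInt l : ℂ)
        = ∑' γ, f (l + γ) * pmu l / (nInt l : ℂ) := by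
    intro l
    rw [mul_div_assoc, ← tsum_mul_right]
    exact tsum_congr (fun γ => (mul_div_assoc _ _ _).symm)
  have hsum2 : Summable (fun l : Multiset ℕ+ =>
      ‖(∑' g : Multiset ℕ+, f (l + g)) * pmu l / (nInt l : ℂ)‖) := by
    refine Summable.of_nonneg_of_le (fun l => norm_nonneg _) (fun l => ?_) hgfiber.2
    rw [hFl l]
    exact norm_tsum_le_tsum_norm (hgfiber.1 l)
  refine ⟨hsum1, hsum2, ?_⟩
  have hsupp : Function.support (Gaux f)
      ⊆ Set.range (fun p : Multiset ℕ+ × Multiset ℕ+ => (p.1 + p.2, p.1)) := by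
    intro q hq
    by_contra hq'
    exact hq (hrange q hq')
  have e1 : (∑' l, f l * pphi l / (nInt l : ℂ)) = ∑' l, ∑' d, Gaux f (l, d) := by
    refine tsum_congr (fun l => ?_)
    rw [← key l]
    refine (tsum_eq_sum (fun d hd => ?_)).symm
    simp only [Gaux]
    exact if_neg (fun hle => hd (mem_pdivisors.2 hle))
  have e2 : (∑' l, ∑' d, Gaux f (l, d)) = ∑' q, Gaux f q :=
    (Summable.tsum_prod' hGsum (fun b => hGsum.prod_factor b)).symm
  have e3 : (∑' q, Gaux f q)
      = ∑' p : Multiset ℕ+ × Multiset ℕ+, f (p.1 + p.2) * pmu p.1 / (nInt p.1 : ℂ) := by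
    rw [← hi.tsum_eq hsupp]
    exact tsum_congr (fun p => hGi p)
  have e4 : (∑' p : Multiset ℕ+ × Multiset ℕ+, f (p.1 + p.2) * pmu p.1 / (nInt p.1 : ℂ))
      = ∑' l, ∑' γ, f (l + γ) * pmu l / (nInt l : ℂ) :=
    Summable.tsum_prod' hgs (fun b => hgs.prod_factor b)
  rw [e1, e2, e3, e4]
  exact tsum_congr (fun l => (hFl l).symm)
end

section
/- Let (c_n)_{n≥1} be an arbitrary sequence of complex numbers. Then: (i) for every n ≥ 1, c_n = ∑_{λ⊢n, λ∈P₌} ∑_{d|ℓ(λ)} c_d · μ(ℓ(λ)/d), where μ is the classical Möbius function; and (ii) the function F(λ) := ∑_{δ|λ, δ∈P₌} ∑_{d|ℓ(δ)} c_d · μ(ℓ(δ)/d) satisfies ∑_{λ⊢n} F(λ) = ∑_{k=1}^{n} c_k · p(n−k) for every n ≥ 0, i.e., ⟨F⟩_q = ∑_{n≥1} c_n qⁿ. -/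
open scoped Classical

/- ### Auxiliary lemmas -/

lemma coe_map_toPtn {n : ℕ} (p : n.Partition) :
    (toPtn p).map (fun a : ℕ+ => (a : ℕ)) = p.parts := by
  unfold toPtn
  refine (Multiset.map_pmap _ _ _ _).trans ?_
  exact (Multiset.pmap_eq_map _ (fun a => a) _ _).trans (Multiset.map_id _)

lemma toPtn_inj {n : ℕ} : Function.Injective (toPtn (n := n)) := by
  intro p q h
  ext1
  rw [← coe_map_toPtn p, ← coe_map_toPtn q, h]

/-- The finset of multisets of positive integers coming from partitions of `n`. -/
noncomputable def Pn (n : ℕ) : Finset (Multiset ℕ+) := Finset.univ.image (toPtn (n := n))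

lemma mem_Pn {n : ℕ} {l : Multiset ℕ+} :
    l ∈ Pn n ↔ (l.map (fun a : ℕ+ => (a : ℕ))).sum = n := by
  constructor
  · rintro hl
    obtain ⟨p, -, rfl⟩ := Finset.mem_image.mp hl
    rw [coe_map_toPtn]
    exact p.parts_sum
  · intro h
    refine Finset.mem_image.mpr ⟨⟨l.map (fun a : ℕ+ => (a : ℕ)), ?_, h⟩, Finset.mem_univ _, ?_⟩
    · intro i hi
      obtain ⟨a, -, rfl⟩ := Multiset.mem_map.mp hi
      exact a.pos
    · apply Multiset.map_injective (fun a b h => PNat.coe_injective h)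
      rw [coe_map_toPtn]

lemma card_Pn (n : ℕ) : (Pn n).card = partcount n := by
  rw [Pn, Finset.card_image_of_injective _ toPtn_inj, partcount, Finset.card_univ]

lemma sum_Pn_eq {n : ℕ} (f : Multiset ℕ+ → ℂ) :
    ∑ l ∈ Pn n, f l = ∑ p : n.Partition, f (toPtn p) :=
  Finset.sum_image (fun _ _ _ _ h => toPtn_inj h)

/-- `g c k = ∑_{d|k} c_d μ(k/d)`. -/
noncomputable def gfun (c : ℕ → ℂ) (k : ℕ) : ℂ :=
  ∑ d ∈ k.divisors, c d * (ArithmeticFunction.moebius (k / d) : ℂ)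

/-- `F(λ)` for `λ ∈ P₌`, else `0`. -/
noncomputable def hfun (c : ℕ → ℂ) (l : Multiset ℕ+) : ℂ :=
  if isPeq l then gfun c (Multiset.card l) else 0

lemma moebius_inv (c : ℕ → ℂ) (n : ℕ) (hn : 0 < n) :
    ∑ k ∈ n.divisors, gfun c k = c n := by
  refine ArithmeticFunction.sum_eq_iff_sum_mul_moebius_eq.mpr ?_ n hn
  intro m hm
  rw [Nat.sum_divisorsAntidiagonal'
    (f := fun x y => ((ArithmeticFunction.moebius x : ℤ) : ℂ) * c y)]
  exact Finset.sum_congr rfl fun d _ => mul_comm _ _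

lemma sum_replicate_coe (k : ℕ) (a : ℕ+) :
    ((Multiset.replicate k a).map (fun a : ℕ+ => (a : ℕ))).sum = k * (a : ℕ) := by
  rw [Multiset.map_replicate, Multiset.sum_replicate, smul_eq_mul]

lemma key (c : ℕ → ℂ) (n : ℕ) (hn : 1 ≤ n) : ∑ l ∈ Pn n, hfun c l = c n := by
  have h0 : ∑ l ∈ Pn n, hfun c l = ∑ l ∈ (Pn n).filter isPeq, gfun c (Multiset.card l) := by
    rw [Finset.sum_filter]
    exact Finset.sum_congr rfl fun l _ => rfl
  rw [h0, ← moebius_inv c n hn]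
  apply Finset.sum_nbij' (i := fun l => Multiset.card l)
      (j := fun k => Multiset.replicate k (n / k).toPNat')
  · intro l hl
    obtain ⟨h1, a, k, hk, rfl⟩ := Finset.mem_filter.mp hl
    rw [mem_Pn, sum_replicate_coe] at h1
    rw [Multiset.card_replicate]
    exact Nat.mem_divisors.mpr ⟨⟨(a : ℕ), h1.symm⟩, by omega⟩
  · intro k hk
    obtain ⟨hkd, hn0⟩ := Nat.mem_divisors.mp hk
    have hkpos : 0 < k := Nat.pos_of_mem_divisors hk
    have hq : 0 < n / k := Nat.div_pos (Nat.le_of_dvd (by omega) hkd) hkpos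
    refine Finset.mem_filter.mpr ⟨mem_Pn.mpr ?_, ⟨_, k, hkpos, rfl⟩⟩
    rw [sum_replicate_coe, PNat.toPNat'_coe hq, Nat.mul_div_cancel' hkd]
  · intro l hl
    obtain ⟨h1, a, k, hk, rfl⟩ := Finset.mem_filter.mp hl
    rw [mem_Pn, sum_replicate_coe] at h1
    rw [Multiset.card_replicate]
    congr 1
    rw [← h1, Nat.mul_div_cancel_left _ hk]
    exact PNat.coe_toPNat' a
  · intro k _
    exact Multiset.card_replicate _ _
  · intro l _
    rfl

lemma Pn_zero_sum (c : ℕ → ℂ) : ∑ l ∈ Pn 0, hfun c l = 0 := by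
  refine Finset.sum_eq_zero fun l hl => ?_
  rw [mem_Pn] at hl
  rw [hfun, if_neg]
  rintro ⟨a, k, hk, rfl⟩
  rw [sum_replicate_coe] at hl
  have := a.pos
  exact absurd hl (by positivity)

set_option maxHeartbeats 1000000 in
/-- For an arbitrary sequence `(c_n)_{n≥1}` of complex numbers:
(i) `c_n = ∑_{λ⊢n, λ∈P₌} ∑_{d|ℓ(λ)} c_d·μ(ℓ(λ)/d)` for every `n ≥ 1`, and
(ii) `F(λ) := ∑_{δ|λ, δ∈P₌} ∑_{d|ℓ(δ)} c_d·μ(ℓ(δ)/d)` satisfies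
`∑_{λ⊢n} F(λ) = ∑_{k=1}^{n} c_k·p(n−k)` for every `n ≥ 0`, i.e. `⟨F⟩_q = ∑_{n≥1} c_n qⁿ`. -/
theorem qbracket_arbitrary_coefficients (c : ℕ → ℂ) :
    (∀ n : ℕ, 1 ≤ n →
      c n = ∑ p : n.Partition,
        if isPeq (toPtn p) then
          ∑ d ∈ (Multiset.card (toPtn p)).divisors,
            c d * (ArithmeticFunction.moebius (Multiset.card (toPtn p) / d) : ℂ)
        else 0) ∧
    (∀ n : ℕ,
      (∑ p : n.Partition, ∑ δ ∈ pdivisors (toPtn p),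
        if isPeq δ then
          ∑ d ∈ (Multiset.card δ).divisors,
            c d * (ArithmeticFunction.moebius (Multiset.card δ / d) : ℂ)
        else 0)
      = ∑ k ∈ Finset.Icc 1 n, c k * (partcount (n - k) : ℂ)) := by
  constructor
  · intro n hn
    exact (key c n hn).symm.trans (sum_Pn_eq (hfun c))
  · intro n
    calc ∑ p : n.Partition, ∑ δ ∈ pdivisors (toPtn p), hfun c δ
        = ∑ l ∈ Pn n, ∑ δ ∈ pdivisors l, hfun c δ :=
          (sum_Pn_eq (fun l => ∑ δ ∈ pdivisors l, hfun c δ)).symm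
      _ = ∑ x ∈ (Pn n).sigma (fun l => pdivisors l), hfun c x.2 :=
          (Finset.sum_sigma (Pn n) (fun l => pdivisors l) (fun x => hfun c x.2)).symm
      _ = ∑ y ∈ (Finset.range (n + 1)).sigma (fun m => Pn m ×ˢ Pn (n - m)), hfun c y.2.1 := by
          apply Finset.sum_nbij'
            (i := fun x => ⟨(x.2.map (fun a : ℕ+ => (a : ℕ))).sum, (x.2, x.1 - x.2)⟩)
            (j := fun y => ⟨y.2.1 + y.2.2, y.2.1⟩)
          · rintro ⟨l, δ⟩ hx
            simp only [Finset.mem_sigma, pdivisors, Multiset.mem_toFinset,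
              Multiset.mem_powerset, mem_Pn] at hx
            obtain ⟨hsum, hle⟩ := hx
            have hadd : (l - δ) + δ = l := tsub_add_cancel_of_le hle
            rw [← hadd, Multiset.map_add, Multiset.sum_add] at hsum
            simp only [Finset.mem_sigma, Finset.mem_range, Finset.mem_product, mem_Pn]
            exact ⟨by omega, trivial, by omega⟩
          · rintro ⟨m, δ, ε⟩ hy
            simp only [Finset.mem_sigma, Finset.mem_range, Finset.mem_product, mem_Pn] at hy
            obtain ⟨h1, hδ, hε⟩ := hy
            simp only [Finset.mem_sigma, pdivisors, Multiset.mem_toFinset,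
              Multiset.mem_powerset, mem_Pn]
            refine ⟨?_, Multiset.le_add_right _ _⟩
            rw [Multiset.map_add, Multiset.sum_add, hδ, hε]
            omega
          · rintro ⟨l, δ⟩ hx
            obtain ⟨-, h2⟩ := Finset.mem_sigma.mp hx
            have hle : δ ≤ l := Multiset.mem_powerset.mp (Multiset.mem_toFinset.mp h2)
            have : δ + (l - δ) = l := by
              rw [add_comm]; exact tsub_add_cancel_of_le hle
            simp only [this]
          · rintro ⟨m, δ, ε⟩ hy
            obtain ⟨-, h2⟩ := Finset.mem_sigma.mp hy
            obtain ⟨hδ, -⟩ := Finset.mem_product.mp h2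
            have h1 : (δ.map (fun a : ℕ+ => (a : ℕ))).sum = m := mem_Pn.mp hδ
            have h2' : (δ + ε) - δ = ε := add_tsub_cancel_left δ ε
            simp only [h1, h2']
          · intro x _
            rfl
      _ = ∑ m ∈ Finset.range (n + 1), ∑ y ∈ Pn m ×ˢ Pn (n - m), hfun c y.1 :=
          Finset.sum_sigma (Finset.range (n + 1)) (fun m => Pn m ×ˢ Pn (n - m)) (fun y => hfun c y.2.1)
      _ = ∑ m ∈ Finset.range (n + 1), (∑ δ ∈ Pn m, hfun c δ) * (partcount (n - m) : ℂ) := by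
          refine Finset.sum_congr rfl fun m _ => ?_
          rw [Finset.sum_product]
          simp only [Finset.sum_const, card_Pn, nsmul_eq_mul]
          rw [← Finset.mul_sum, mul_comm]
      _ = ∑ k ∈ Finset.Icc 1 n, c k * (partcount (n - k) : ℂ) := by
          have hins : Finset.range (n + 1) = insert 0 (Finset.Icc 1 n) := by
            ext m
            simp only [Finset.mem_range, Finset.mem_insert, Finset.mem_Icc]
            omega
          rw [hins, Finset.sum_insert (by simp), Pn_zero_sum, zero_mul, zero_add]
          exact Finset.sum_congr rfl fun k hk => by
            rw [key c k (Finset.mem_Icc.mp hk).1]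
end
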